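/- Sapir's group K, defined by the presentation ⟨a,b,r,t,x,z | xaxa=t, bxbx=t, bbtaa=t, a⁻¹br=ra⁻¹b, zt=tz, btaz=zbta⟩, is isomorphic to the group defined by the presentation ⟨u,v,b,r,z | u²=v², bvbu=b⁻¹ub⁻¹v, u⁻¹b⁻¹vbr=ru⁻¹b⁻¹vb, zu²=u²z, zbvbu=bvbuz⟩, via the correspondence u=xa, v=bx, t=bxbx. -/
import Mathlib


/-- Generators a, b, r, t, x, z of the original presentation of Sapir's group K. -/
inductive Gen6 : Type
  | a | b | r | t | x | z
  deriving DecidableEq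

/-- Relators of ⟨a,b,r,t,x,z | xaxa=t, bxbx=t, bbtaa=t, a⁻¹br=ra⁻¹b, zt=tz, btaz=zbta⟩. -/
def rels6 : Set (FreeGroup Gen6) :=
  letI a := FreeGroup.of Gen6.a
  letI b := FreeGroup.of Gen6.b
  letI r := FreeGroup.of Gen6.r
  letI t := FreeGroup.of Gen6.t
  letI x := FreeGroup.of Gen6.x
  letI z := FreeGroup.of Gen6.z
  { x * a * x * a * t⁻¹,
    b * x * b * x * t⁻¹,
    b * b * t * a * a * t⁻¹,
    a⁻¹ * b * r * (r * a⁻¹ * b)⁻¹,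
    z * t * (t * z)⁻¹,
    b * t * a * z * (z * b * t * a)⁻¹ }

/-- Generators u, v, b, r, z of the final presentation. -/
inductive Gen5 : Type
  | u | v | b | r | z
  deriving DecidableEq

/-- Relators of ⟨u,v,b,r,z | u²=v², bvbu=b⁻¹ub⁻¹v, u⁻¹b⁻¹vbr=ru⁻¹b⁻¹vb, zu²=u²z,
    zbvbu=bvbuz⟩. -/
def rels5 : Set (FreeGroup Gen5) :=
  letI u := FreeGroup.of Gen5.u
  letI v := FreeGroup.of Gen5.v
  letI b := FreeGroup.of Gen5.b
  letI r := FreeGroup.of Gen5.r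
  letI z := FreeGroup.of Gen5.z
  { u ^ 2 * (v ^ 2)⁻¹,
    b * v * b * u * (b⁻¹ * u * b⁻¹ * v)⁻¹,
    u⁻¹ * b⁻¹ * v * b * r * (r * u⁻¹ * b⁻¹ * v * b)⁻¹,
    z * u ^ 2 * (u ^ 2 * z)⁻¹,
    z * b * v * b * u * (b * v * b * u * z)⁻¹ }

section Aux

lemma mk_rel_eq_one {α : Type*} {rels : Set (FreeGroup α)} {r : FreeGroup α}
    (h : r ∈ rels) : PresentedGroup.mk rels r = 1 :=
  (QuotientGroup.eq_one_iff r).mpr (Subgroup.subset_normalClosure h)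

open PresentedGroup

local notation "a6" => (PresentedGroup.of Gen6.a : PresentedGroup rels6)
local notation "b6" => (PresentedGroup.of Gen6.b : PresentedGroup rels6)
local notation "r6" => (PresentedGroup.of Gen6.r : PresentedGroup rels6)
local notation "t6" => (PresentedGroup.of Gen6.t : PresentedGroup rels6)
local notation "x6" => (PresentedGroup.of Gen6.x : PresentedGroup rels6)
local notation "z6" => (PresentedGroup.of Gen6.z : PresentedGroup rels6)

lemma e1 : x6 * a6 * x6 * a6 = t6 := by
  rw [← mul_inv_eq_one]; exact mk_rel_eq_one (by simp [rels6])
lemma e2 : b6 * x6 * b6 * x6 = t6 := by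
  rw [← mul_inv_eq_one]; exact mk_rel_eq_one (by simp [rels6])
lemma e3 : b6 * b6 * t6 * a6 * a6 = t6 := by
  rw [← mul_inv_eq_one]; exact mk_rel_eq_one (by simp [rels6])
lemma e4 : a6⁻¹ * b6 * r6 = r6 * a6⁻¹ * b6 := by
  rw [← mul_inv_eq_one]; exact mk_rel_eq_one (by simp [rels6])
lemma e5 : z6 * t6 = t6 * z6 := by
  rw [← mul_inv_eq_one]; exact mk_rel_eq_one (by simp [rels6])
lemma e6 : b6 * t6 * a6 * z6 = z6 * b6 * t6 * a6 := by
  rw [← mul_inv_eq_one]; exact mk_rel_eq_one (by simp [rels6])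

local notation "u5" => (PresentedGroup.of Gen5.u : PresentedGroup rels5)
local notation "v5" => (PresentedGroup.of Gen5.v : PresentedGroup rels5)
local notation "b5" => (PresentedGroup.of Gen5.b : PresentedGroup rels5)
local notation "r5" => (PresentedGroup.of Gen5.r : PresentedGroup rels5)
local notation "z5" => (PresentedGroup.of Gen5.z : PresentedGroup rels5)

lemma E1 : u5 ^ 2 = v5 ^ 2 := by
  rw [← mul_inv_eq_one]; exact mk_rel_eq_one (by simp [rels5])
lemma E1' : u5 * u5 = v5 * v5 := by
  have h := E1; rwa [pow_two, pow_two] at h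
lemma E2 : b5 * v5 * b5 * u5 = b5⁻¹ * u5 * b5⁻¹ * v5 := by
  rw [← mul_inv_eq_one]; exact mk_rel_eq_one (by simp [rels5])
lemma E3 : u5⁻¹ * b5⁻¹ * v5 * b5 * r5 = r5 * u5⁻¹ * b5⁻¹ * v5 * b5 := by
  rw [← mul_inv_eq_one]; exact mk_rel_eq_one (by simp [rels5])
lemma E4 : z5 * u5 ^ 2 = u5 ^ 2 * z5 := by
  rw [← mul_inv_eq_one]; exact mk_rel_eq_one (by simp [rels5])
lemma E4' : z5 * (u5 * u5) = u5 * u5 * z5 := by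
  have h := E4; rwa [pow_two] at h
lemma E5 : z5 * b5 * v5 * b5 * u5 = b5 * v5 * b5 * u5 * z5 := by
  rw [← mul_inv_eq_one]; exact mk_rel_eq_one (by simp [rels5])

/-- image of the 5 generators in `PresentedGroup rels6` -/
def f5 : Gen5 → PresentedGroup rels6
  | Gen5.u => x6 * a6
  | Gen5.v => b6 * x6
  | Gen5.b => b6
  | Gen5.r => r6
  | Gen5.z => z6

/-- image of the 6 generators in `PresentedGroup rels5` -/
def f6 : Gen6 → PresentedGroup rels5
  | Gen6.a => v5⁻¹ * b5 * u5
  | Gen6.b => b5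
  | Gen6.r => r5
  | Gen6.t => v5 * v5
  | Gen6.x => b5⁻¹ * v5
  | Gen6.z => z5

lemma hf5 : ∀ r ∈ rels5, FreeGroup.lift f5 r = 1 := by
  intro w hw
  simp only [rels5, Set.mem_insert_iff, Set.mem_singleton_iff] at hw
  rcases hw with rfl | rfl | rfl | rfl | rfl <;>
    simp only [map_mul, map_inv, map_pow, FreeGroup.lift_apply_of, f5, pow_two]
  · calc (x6 * a6 * (x6 * a6)) * ((b6 * x6) * (b6 * x6))⁻¹
        = (x6 * a6 * x6 * a6) * (b6 * x6 * b6 * x6)⁻¹ := by group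
      _ = t6 * t6⁻¹ := by rw [e1, e2]
      _ = 1 := by group
  · have e3' : b6⁻¹ * t6 * a6⁻¹ = b6 * t6 * a6 := by
      conv_lhs => rw [← e3]
      group
    calc b6 * (b6 * x6) * b6 * (x6 * a6) * ((b6⁻¹ * (x6 * a6) * b6⁻¹ * (b6 * x6))⁻¹)
        = (b6 * (b6 * x6 * b6 * x6) * a6) * (b6⁻¹ * (x6 * a6 * x6 * a6) * a6⁻¹)⁻¹ := by group
      _ = (b6 * t6 * a6) * (b6⁻¹ * t6 * a6⁻¹)⁻¹ := by rw [e1, e2]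
      _ = (b6 * t6 * a6) * (b6 * t6 * a6)⁻¹ := by rw [e3']
      _ = 1 := by group
  · calc (x6 * a6)⁻¹ * b6⁻¹ * (b6 * x6) * b6 * r6 *
          (r6 * (x6 * a6)⁻¹ * b6⁻¹ * (b6 * x6) * b6)⁻¹
        = (a6⁻¹ * b6 * r6) * (r6 * a6⁻¹ * b6)⁻¹ := by group
      _ = (r6 * a6⁻¹ * b6) * (r6 * a6⁻¹ * b6)⁻¹ := by rw [e4]
      _ = 1 := by group
  · calc z6 * (x6 * a6 * (x6 * a6)) * ((x6 * a6 * (x6 * a6)) * z6)⁻¹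
        = (z6 * (x6 * a6 * x6 * a6)) * ((x6 * a6 * x6 * a6) * z6)⁻¹ := by group
      _ = (z6 * t6) * (t6 * z6)⁻¹ := by rw [e1]
      _ = (t6 * z6) * (t6 * z6)⁻¹ := by rw [e5]
      _ = 1 := by group
  · calc z6 * b6 * (b6 * x6) * b6 * (x6 * a6) *
          ((b6 * (b6 * x6) * b6 * (x6 * a6) * z6)⁻¹)
        = (z6 * b6 * (b6 * x6 * b6 * x6) * a6) * (b6 * (b6 * x6 * b6 * x6) * a6 * z6)⁻¹ := by
          group
      _ = (z6 * b6 * t6 * a6) * (b6 * t6 * a6 * z6)⁻¹ := by rw [e2]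
      _ = (z6 * b6 * t6 * a6) * (z6 * b6 * t6 * a6)⁻¹ := by rw [e6]
      _ = 1 := by group

lemma hf6 : ∀ r ∈ rels6, FreeGroup.lift f6 r = 1 := by
  intro w hw
  simp only [rels6, Set.mem_insert_iff, Set.mem_singleton_iff] at hw
  rcases hw with rfl | rfl | rfl | rfl | rfl | rfl <;>
    simp only [map_mul, map_inv, map_pow, FreeGroup.lift_apply_of, f6, pow_two]
  · calc (b5⁻¹ * v5) * (v5⁻¹ * b5 * u5) * (b5⁻¹ * v5) * (v5⁻¹ * b5 * u5) * (v5 * v5)⁻¹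
        = (u5 * u5) * (v5 * v5)⁻¹ := by group
      _ = (v5 * v5) * (v5 * v5)⁻¹ := by rw [E1']
      _ = 1 := by group
  · group
  · calc b5 * b5 * (v5 * v5) * (v5⁻¹ * b5 * u5) * (v5⁻¹ * b5 * u5) * (v5 * v5)⁻¹
        = b5 * (b5 * v5 * b5 * u5) * (v5⁻¹ * b5 * u5) * (v5 * v5)⁻¹ := by group
      _ = b5 * (b5⁻¹ * u5 * b5⁻¹ * v5) * (v5⁻¹ * b5 * u5) * (v5 * v5)⁻¹ := by rw [E2]
      _ = (u5 * u5) * (v5 * v5)⁻¹ := by group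
      _ = (v5 * v5) * (v5 * v5)⁻¹ := by rw [E1']
      _ = 1 := by group
  · calc (v5⁻¹ * b5 * u5)⁻¹ * b5 * r5 * (r5 * (v5⁻¹ * b5 * u5)⁻¹ * b5)⁻¹
        = (u5⁻¹ * b5⁻¹ * v5 * b5 * r5) * (r5 * u5⁻¹ * b5⁻¹ * v5 * b5)⁻¹ := by group
      _ = (r5 * u5⁻¹ * b5⁻¹ * v5 * b5) * (r5 * u5⁻¹ * b5⁻¹ * v5 * b5)⁻¹ := by rw [E3]
      _ = 1 := by group
  · calc z5 * (v5 * v5) * ((v5 * v5) * z5)⁻¹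
        = z5 * (u5 * u5) * ((u5 * u5) * z5)⁻¹ := by rw [← E1']
      _ = (u5 * u5 * z5) * ((u5 * u5) * z5)⁻¹ := by rw [E4']
      _ = 1 := by group
  · calc b5 * (v5 * v5) * (v5⁻¹ * b5 * u5) * z5 * (z5 * b5 * (v5 * v5) * (v5⁻¹ * b5 * u5))⁻¹
        = (b5 * v5 * b5 * u5 * z5) * (z5 * b5 * v5 * b5 * u5)⁻¹ := by group
      _ = (b5 * v5 * b5 * u5 * z5) * (b5 * v5 * b5 * u5 * z5)⁻¹ := by rw [E5]
      _ = 1 := by group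

def phi : PresentedGroup rels5 →* PresentedGroup rels6 := PresentedGroup.toGroup hf5
def psi : PresentedGroup rels6 →* PresentedGroup rels5 := PresentedGroup.toGroup hf6

lemma psi_phi : psi.comp phi = MonoidHom.id _ := by
  ext g
  cases g <;>
    simp only [MonoidHom.comp_apply, MonoidHom.id_apply, phi, psi, PresentedGroup.toGroup.of,
      f5, f6, map_mul, map_inv, map_pow, pow_two] <;>
    group

lemma phi_psi : phi.comp psi = MonoidHom.id _ := by
  ext g
  cases g <;>
    simp only [MonoidHom.comp_apply, MonoidHom.id_apply, phi, psi, PresentedGroup.toGroup.of,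
      f5, f6, map_mul, map_inv, map_pow, pow_two]
  case t =>
    calc (b6 * x6 * (b6 * x6) : PresentedGroup rels6)
        = b6 * x6 * b6 * x6 := by group
      _ = t6 := e2
  all_goals group

/-- the isomorphism -/
noncomputable def sapirEquiv : PresentedGroup rels5 ≃* PresentedGroup rels6 :=
  MonoidHom.toMulEquiv phi psi psi_phi phi_psi

lemma sapirEquiv_apply (g : Gen5) : sapirEquiv (PresentedGroup.of g) = f5 g :=
  PresentedGroup.toGroup.of hf5

lemma sapir_aux :
    ∃ e : PresentedGroup rels5 ≃* PresentedGroup rels6,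
      e (PresentedGroup.of Gen5.u) =
        PresentedGroup.of Gen6.x * PresentedGroup.of Gen6.a ∧
      e (PresentedGroup.of Gen5.v) =
        PresentedGroup.of Gen6.b * PresentedGroup.of Gen6.x ∧
      e (PresentedGroup.of Gen5.b) = PresentedGroup.of Gen6.b ∧
      e (PresentedGroup.of Gen5.r) = PresentedGroup.of Gen6.r ∧
      e (PresentedGroup.of Gen5.z) = PresentedGroup.of Gen6.z ∧
      e (PresentedGroup.of Gen5.v ^ 2) = PresentedGroup.of Gen6.t := by
  refine ⟨sapirEquiv, sapirEquiv_apply Gen5.u, sapirEquiv_apply Gen5.v, sapirEquiv_apply Gen5.b,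
    sapirEquiv_apply Gen5.r, sapirEquiv_apply Gen5.z, ?_⟩
  calc sapirEquiv (PresentedGroup.of Gen5.v ^ 2)
      = (sapirEquiv (PresentedGroup.of Gen5.v)) ^ 2 := map_pow _ _ _
    _ = (b6 * x6) ^ 2 := by rw [sapirEquiv_apply Gen5.v]; rfl
    _ = b6 * x6 * b6 * x6 := by rw [pow_two]; group
    _ = t6 := e2

end Aux

/-- Sapir's group K is isomorphic to the group with the final presentation, via the
correspondence u = xa, v = bx (so that t = bxbx), with b, r, z corresponding to
themselves. -/
theorem sapir_final_presentation :
    ∃ e : PresentedGroup rels5 ≃* PresentedGroup rels6,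
      e (PresentedGroup.of Gen5.u) =
        PresentedGroup.of Gen6.x * PresentedGroup.of Gen6.a ∧
      e (PresentedGroup.of Gen5.v) =
        PresentedGroup.of Gen6.b * PresentedGroup.of Gen6.x ∧
      e (PresentedGroup.of Gen5.b) = PresentedGroup.of Gen6.b ∧
      e (PresentedGroup.of Gen5.r) = PresentedGroup.of Gen6.r ∧
      e (PresentedGroup.of Gen5.z) = PresentedGroup.of Gen6.z ∧
      e (PresentedGroup.of Gen5.v ^ 2) = PresentedGroup.of Gen6.t := by
  exact sapir_aux
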